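/- Let A₁ and A₂ be disjoint sets such that A₁, A₂, and A₁ ∪ A₂ are all HO in G. Then for any pattern p, N(G*)p = 𝟏 if and only if N(G)p = 𝟏 and x_{A₁}·p = 0 and x_{A₂}·p = 0. Moreover, A₁ and A₂ are NO in G*, and ν(G*) = ν(G) − 2. -/

import Mathlib

open Matrix
open scoped Classical

/-- The closed neighborhood matrix of a simple graph over `ℤ₂`:
`N(G) u v = 1` iff `u = v` or `u` is adjacent to `v`. -/
noncomputable def nbhdMatrix {V : Type*} [Fintype V] (G : SimpleGraph V) :
    Matrix V V (ZMod 2) :=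
  Matrix.of fun u v => if u = v ∨ G.Adj u v then 1 else 0

/-- The nullity of a matrix over `ℤ₂`: the dimension of its kernel. -/
noncomputable def nullityM {V : Type*} [Fintype V] (M : Matrix V V (ZMod 2)) : ℕ :=
  Module.finrank (ZMod 2) (LinearMap.ker M.mulVecLin)

/-- The nullity `ν(G)` of a graph. -/
noncomputable def graphNullity {V : Type*} [Fintype V] (G : SimpleGraph V) : ℕ :=
  nullityM (nbhdMatrix G)

/-- Characteristic vector of a set of vertices. -/
noncomputable def chi {V : Type*} (A : Set V) : V → ZMod 2 :=
  fun v => if v ∈ A then 1 else 0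

/-- A configuration `c` is solvable (w.r.t. the matrix `M`) if `M p = c` for some pattern `p`. -/
def Solv {V : Type*} [Fintype V] (M : Matrix V V (ZMod 2)) (c : V → ZMod 2) : Prop :=
  ∃ p : V → ZMod 2, M.mulVec p = c

/-- `A` is `c`-always odd activated: `A` is solvable and `x_A · p = 1` for every solving
pattern `p` for `c`. -/
def cAO {V : Type*} [Fintype V] (M : Matrix V V (ZMod 2)) (c : V → ZMod 2)
    (A : Set V) : Prop :=
  Solv M (chi A) ∧ ∀ p : V → ZMod 2, M.mulVec p = c → chi A ⬝ᵥ p = 1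

/-- `A` is `c`-never odd activated: `A` is solvable and `x_A · p = 0` for every solving
pattern `p` for `c`. -/
def cNO {V : Type*} [Fintype V] (M : Matrix V V (ZMod 2)) (c : V → ZMod 2)
    (A : Set V) : Prop :=
  Solv M (chi A) ∧ ∀ p : V → ZMod 2, M.mulVec p = c → chi A ⬝ᵥ p = 0

/-- `A` is always odd activated (AO): `𝟏`-always odd activated. -/
def AO {V : Type*} [Fintype V] (M : Matrix V V (ZMod 2)) (A : Set V) : Prop :=
  cAO M 1 A

/-- `A` is never odd activated (NO): `𝟏`-never odd activated. -/
def NO {V : Type*} [Fintype V] (M : Matrix V V (ZMod 2)) (A : Set V) : Prop :=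
  cNO M 1 A

/-- `A` is half odd activated (HO): `x_A` is not solvable. -/
def HO {V : Type*} [Fintype V] (M : Matrix V V (ZMod 2)) (A : Set V) : Prop :=
  ¬ Solv M (chi A)

/-- The closed neighborhood matrix of the graph `G*` obtained from `G` by toggling every
pair of vertices between the disjoint sets `A₁` and `A₂`:
`N(G*) = N(G) + x_{A₁} x_{A₂}ᵗ + x_{A₂} x_{A₁}ᵗ` over `ℤ₂`. -/
noncomputable def starMatrix {V : Type*} [Fintype V] (G : SimpleGraph V)
    (A₁ A₂ : Set V) : Matrix V V (ZMod 2) :=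
  nbhdMatrix G + Matrix.vecMulVec (chi A₁) (chi A₂) + Matrix.vecMulVec (chi A₂) (chi A₁)

section Aux

variable {V : Type*} [Fintype V]

lemma zmod2_cases : ∀ x : ZMod 2, x = 0 ∨ x = 1 := by decide

lemma zmod2_add_self : ∀ x : ZMod 2, x + x = 0 := by decide

lemma zmod2_mul_self : ∀ x : ZMod 2, x * x = x := by decide

/-- The dual element given by dot product with `x`. -/
noncomputable def dotD (x : V → ZMod 2) : Module.Dual (ZMod 2) (V → ZMod 2) where
  toFun y := x ⬝ᵥ y
  map_add' y z := dotProduct_add x y z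
  map_smul' c y := by simp [dotProduct_smul, smul_eq_mul]

@[simp] lemma dotD_apply (x y : V → ZMod 2) : dotD x y = x ⬝ᵥ y := rfl

lemma dotD_injective : Function.Injective (dotD (V := V)) := by
  intro x y h
  have h' : ∀ w, (x - y) ⬝ᵥ w = 0 := by
    intro w
    have := congrFun (congrArg DFunLike.coe h) w
    simp only [dotD_apply] at this
    rw [sub_dotProduct, this, sub_self]
  have := dotProduct_eq_zero _ h'
  exact sub_eq_zero.mp this

lemma dotD_surjective : Function.Surjective (dotD (V := V)) := by
  intro ψ
  refine ⟨fun v => ψ (Pi.single v 1), LinearMap.ext fun y => ?_⟩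
  have hy : y = ∑ v, Pi.single v (y v) := (Finset.univ_sum_single y).symm
  rw [dotD_apply]
  conv_rhs => rw [hy]
  rw [map_sum]
  unfold dotProduct
  refine Finset.sum_congr rfl fun v _ => ?_
  have : Pi.single v (y v) = y v • (Pi.single v 1 : V → ZMod 2) := by
    rw [← Pi.single_smul, smul_eq_mul, mul_one]
  rw [this, _root_.map_smul, smul_eq_mul, mul_comm]

/-- Fredholm alternative for symmetric matrices over `ℤ₂`. -/
lemma solv_of_orth (M : Matrix V V (ZMod 2)) (hsym : Mᵀ = M) {c : V → ZMod 2}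
    (h : ∀ z, M.mulVec z = 0 → c ⬝ᵥ z = 0) : ∃ p, M.mulVec p = c := by
  have hmem : dotD c ∈ Submodule.dualAnnihilator (LinearMap.ker M.mulVecLin) := by
    rw [Submodule.mem_dualAnnihilator]
    intro z hz
    exact h z (by simpa [Matrix.mulVecLin_apply] using hz)
  rw [← LinearMap.range_dualMap_eq_dualAnnihilator_ker] at hmem
  obtain ⟨ψ, hψ⟩ := hmem
  obtain ⟨p, rfl⟩ := dotD_surjective ψ
  refine ⟨p, dotD_injective (LinearMap.ext fun y => ?_)⟩
  have hy := congrFun (congrArg DFunLike.coe hψ) y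
  simp only [LinearMap.dualMap_apply', LinearMap.comp_apply, dotD_apply,
    Matrix.mulVecLin_apply] at hy
  rw [dotD_apply, dotD_apply]
  calc (M.mulVec p) ⬝ᵥ y = (p ᵥ* M) ⬝ᵥ y := by rw [← Matrix.mulVec_transpose, hsym]
    _ = p ⬝ᵥ (M.mulVec y) := (Matrix.dotProduct_mulVec p M y).symm
    _ = c ⬝ᵥ y := hy

lemma exists_ker_dot_one (M : Matrix V V (ZMod 2)) (hsym : Mᵀ = M) {c : V → ZMod 2}
    (h : ¬ ∃ p, M.mulVec p = c) : ∃ z, M.mulVec z = 0 ∧ c ⬝ᵥ z = 1 := by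
  by_contra hno
  push_neg at hno
  refine h (solv_of_orth M hsym fun z hz => ?_)
  rcases zmod2_cases (c ⬝ᵥ z) with h0 | h1
  · exact h0
  · exact absurd h1 (hno z hz)

end Aux

section Aux2

set_option linter.unusedSectionVars false

variable {V : Type*} [Fintype V]

lemma nbhd_symm (G : SimpleGraph V) : (nbhdMatrix G)ᵀ = nbhdMatrix G := by
  ext u v
  simp only [Matrix.transpose_apply, nbhdMatrix, Matrix.of_apply]
  rw [G.adj_comm]
  rw [show (v = u) ↔ (u = v) from eq_comm]

lemma nbhd_symm' (G : SimpleGraph V) (u v : V) :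
    nbhdMatrix G u v = nbhdMatrix G v u := by
  conv_lhs => rw [← nbhd_symm G, Matrix.transpose_apply]

lemma vecMulVec_tr (x y : V → ZMod 2) :
    (Matrix.vecMulVec x y)ᵀ = Matrix.vecMulVec y x := by
  ext u v
  simp [Matrix.vecMulVec_apply, mul_comm]

lemma starMat_symm (G : SimpleGraph V) (A₁ A₂ : Set V) :
    (starMatrix G A₁ A₂)ᵀ = starMatrix G A₁ A₂ := by
  rw [starMatrix, Matrix.transpose_add, Matrix.transpose_add, nbhd_symm,
    vecMulVec_tr, vecMulVec_tr]
  abel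

lemma vecMulVec_mulVec (x y p : V → ZMod 2) :
    (Matrix.vecMulVec x y).mulVec p = (y ⬝ᵥ p) • x := by
  ext i
  simp only [Matrix.mulVec, Matrix.vecMulVec_apply, dotProduct,
    Pi.smul_apply, smul_eq_mul, Finset.sum_mul]
  exact Finset.sum_congr rfl fun j _ => by ring

lemma starMat_mulVec (G : SimpleGraph V) (A₁ A₂ : Set V) (p : V → ZMod 2) :
    (starMatrix G A₁ A₂).mulVec p =
      (nbhdMatrix G).mulVec p + (chi A₂ ⬝ᵥ p) • chi A₁ + (chi A₁ ⬝ᵥ p) • chi A₂ := by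
  rw [starMatrix, Matrix.add_mulVec, Matrix.add_mulVec, _root_.vecMulVec_mulVec, _root_.vecMulVec_mulVec]

lemma chi_union {A₁ A₂ : Set V} (hd : Disjoint A₁ A₂) :
    chi (A₁ ∪ A₂) = chi A₁ + chi A₂ := by
  funext v
  simp only [chi, Pi.add_apply, Set.mem_union]
  by_cases h1 : v ∈ A₁
  · have h2 : v ∉ A₂ := fun h => Set.disjoint_left.mp hd h1 h
    simp [h1, h2]
  · by_cases h2 : v ∈ A₂ <;> simp [h1, h2]

lemma sutner (G : SimpleGraph V) :
    ∀ z, (nbhdMatrix G).mulVec z = 0 → (1 : V → ZMod 2) ⬝ᵥ z = 0 := by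
  intro z hz
  have hzero : z ⬝ᵥ ((nbhdMatrix G).mulVec z) = 0 := by rw [hz]; simp
  have key : z ⬝ᵥ ((nbhdMatrix G).mulVec z) = ∑ u, z u := by
    unfold dotProduct Matrix.mulVec dotProduct
    set f : V × V → ZMod 2 := fun q =>
      if q.1 = q.2 then 0 else z q.1 * (nbhdMatrix G q.1 q.2 * z q.2) with hf
    have hoff : ∑ q ∈ Finset.univ ×ˢ Finset.univ, f q = 0 := by
      refine Finset.sum_ninvolution Prod.swap ?_ ?_ (fun a => Finset.mem_product.mpr
        ⟨Finset.mem_univ _, Finset.mem_univ _⟩) (fun a => Prod.swap_swap a)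
      · rintro ⟨u, v⟩
        by_cases h : u = v
        · subst h; simp [hf]
        · have h' : ¬ v = u := fun hh => h hh.symm
          simp only [hf, Prod.swap_prod_mk, if_neg h, if_neg h']
          rw [← nbhd_symm' G u v]
          rw [show z v * (nbhdMatrix G u v * z u)
              = z u * (nbhdMatrix G u v * z v) by ring]
          exact zmod2_add_self _
      · rintro ⟨u, v⟩ ha hsw
        apply ha
        have h1 : v = u := congrArg Prod.fst hsw
        simp [hf, h1]
    have expand : ∀ u, z u * (∑ v, nbhdMatrix G u v * z v)
        = z u + ∑ v, f (u, v) := by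
      intro u
      rw [Finset.mul_sum]
      have hterm : ∀ v, z u * (nbhdMatrix G u v * z v)
          = (if u = v then z u * (nbhdMatrix G u v * z v) else 0) + f (u, v) := by
        intro v
        by_cases h : u = v <;> simp [hf, h]
      rw [Finset.sum_congr rfl fun v _ => hterm v, Finset.sum_add_distrib]
      congr 1
      rw [Finset.sum_ite_eq Finset.univ u (fun v => z u * (nbhdMatrix G u v * z v))]
      have hNuu : nbhdMatrix G u u = 1 := by simp [nbhdMatrix]
      simp [hNuu, zmod2_mul_self]
    calc ∑ u, z u * (∑ v, nbhdMatrix G u v * z v)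
        = ∑ u, (z u + ∑ v, f (u, v)) := Finset.sum_congr rfl fun u _ => expand u
      _ = ∑ u, z u + ∑ u, ∑ v, f (u, v) := Finset.sum_add_distrib
      _ = ∑ u, z u := by rw [← Finset.sum_product (f := f), hoff, add_zero]
  have hsum : ∑ u, z u = 0 := by rw [← key, hzero]
  simpa [dotProduct] using hsum

lemma pick (M : Matrix V V (ZMod 2)) (a b : V → ZMod 2)
    (ha : ∃ z, M.mulVec z = 0 ∧ a ⬝ᵥ z = 1) (hb : ∃ z, M.mulVec z = 0 ∧ b ⬝ᵥ z = 1)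
    (hab : ∃ z, M.mulVec z = 0 ∧ a ⬝ᵥ z + b ⬝ᵥ z = 1) :
    ∃ z, M.mulVec z = 0 ∧ a ⬝ᵥ z = 1 ∧ b ⬝ᵥ z = 0 := by
  obtain ⟨z₁, hz₁, ha₁⟩ := ha
  obtain ⟨z₂, hz₂, hb₂⟩ := hb
  obtain ⟨z₃, hz₃, hab₃⟩ := hab
  rcases zmod2_cases (b ⬝ᵥ z₁) with h | h
  · exact ⟨z₁, hz₁, ha₁, h⟩
  rcases zmod2_cases (a ⬝ᵥ z₂) with h' | h'
  · refine ⟨z₁ + z₂, by rw [Matrix.mulVec_add, hz₁, hz₂, add_zero], ?_, ?_⟩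
    · rw [dotProduct_add, ha₁, h', add_zero]
    · rw [dotProduct_add, h, hb₂]; decide
  · rcases zmod2_cases (a ⬝ᵥ z₃) with h₃ | h₃
    · have hb₃ : b ⬝ᵥ z₃ = 1 := by rwa [h₃, zero_add] at hab₃
      refine ⟨z₁ + z₃, by rw [Matrix.mulVec_add, hz₁, hz₃, add_zero], ?_, ?_⟩
      · rw [dotProduct_add, ha₁, h₃, add_zero]
      · rw [dotProduct_add, h, hb₃]; decide
    · have hb₃ : b ⬝ᵥ z₃ = 0 := by
        rw [h₃] at hab₃
        have : ∀ x : ZMod 2, 1 + x = 1 → x = 0 := by decide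
        exact this _ hab₃
      exact ⟨z₃, hz₃, h₃, hb₃⟩

end Aux2

section Aux3

variable {V : Type*} [Fintype V]

lemma nullity_lemma (M S : Matrix V V (ZMod 2)) (a b : V → ZMod 2)
    (hker : ∀ z, S.mulVec z = 0 ↔ (M.mulVec z = 0 ∧ a ⬝ᵥ z = 0 ∧ b ⬝ᵥ z = 0))
    (z10 z01 : V → ZMod 2)
    (hz10 : M.mulVec z10 = 0) (ha10 : a ⬝ᵥ z10 = 1) (hb10 : b ⬝ᵥ z10 = 0)
    (hz01 : M.mulVec z01 = 0) (ha01 : a ⬝ᵥ z01 = 0) (hb01 : b ⬝ᵥ z01 = 1) :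
    nullityM S + 2 = nullityM M := by
  classical
  set K := LinearMap.ker M.mulVecLin with hK
  set L : (V → ZMod 2) →ₗ[ZMod 2] ZMod 2 × ZMod 2 :=
    LinearMap.prod (dotD a) (dotD b) with hL
  have hLapp : ∀ x, L x = (a ⬝ᵥ x, b ⬝ᵥ x) := fun x => rfl
  have hkerS : LinearMap.ker S.mulVecLin = K ⊓ LinearMap.ker L := by
    ext z
    simp only [LinearMap.mem_ker, Matrix.mulVecLin_apply, Submodule.mem_inf, hK,
      hLapp, Prod.mk_eq_zero]
    rw [hker z]
  set L' : K →ₗ[ZMod 2] ZMod 2 × ZMod 2 := L.comp K.subtype with hL'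
  have hkerL' : LinearMap.ker L' = Submodule.comap K.subtype (K ⊓ LinearMap.ker L) := by
    rw [hL', LinearMap.ker_comp, Submodule.comap_inf, Submodule.comap_subtype_self, top_inf_eq]
  have e1 : (LinearMap.ker L') ≃ₗ[ZMod 2] ↥(K ⊓ LinearMap.ker L) := by
    rw [hkerL']
    exact Submodule.comapSubtypeEquivOfLe inf_le_left
  have hmem10 : z10 ∈ K := LinearMap.mem_ker.mpr (by simpa [Matrix.mulVecLin_apply] using hz10)
  have hmem01 : z01 ∈ K := LinearMap.mem_ker.mpr (by simpa [Matrix.mulVecLin_apply] using hz01)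
  have hrange : LinearMap.range L' = ⊤ := by
    rw [LinearMap.range_eq_top]
    intro w
    refine ⟨w.1 • ⟨z10, hmem10⟩ + w.2 • ⟨z01, hmem01⟩, ?_⟩
    have hval : L' (w.1 • (⟨z10, hmem10⟩ : K) + w.2 • (⟨z01, hmem01⟩ : K))
        = w.1 • L z10 + w.2 • L z01 := by
      simp [hL']
    rw [hval, hLapp, hLapp, ha10, hb10, ha01, hb01]
    ext <;> simp
  have hrank := LinearMap.finrank_range_add_finrank_ker L'
  have h2' : Module.finrank (ZMod 2) (LinearMap.range L') = 2 := by
    rw [hrange, finrank_top, Module.finrank_prod, Module.finrank_self]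
  have hkereq : nullityM S = Module.finrank (ZMod 2) (LinearMap.ker L') := by
    rw [nullityM, hkerS]
    exact (LinearEquiv.finrank_eq e1).symm
  rw [hkereq, nullityM, ← hK]
  rw [h2'] at hrank
  omega

end Aux3

/-- Proposition (HO, HO, union HO): the odd dominating patterns of `G*` are exactly the
odd dominating patterns `p` of `G` with `x_{A₁} · p = 0` and `x_{A₂} · p = 0`; `A₁` and
`A₂` are NO in `G*`, and `ν(G*) = ν(G) − 2`. -/
theorem stmt17 {V : Type*} [Fintype V] (G : SimpleGraph V) (A₁ A₂ : Set V)
    (hd : Disjoint A₁ A₂)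
    (h1 : HO (nbhdMatrix G) A₁) (h2 : HO (nbhdMatrix G) A₂)
    (h3 : HO (nbhdMatrix G) (A₁ ∪ A₂)) :
    (∀ p : V → ZMod 2, (starMatrix G A₁ A₂).mulVec p = 1 ↔
      ((nbhdMatrix G).mulVec p = 1 ∧ chi A₁ ⬝ᵥ p = 0 ∧ chi A₂ ⬝ᵥ p = 0)) ∧
    NO (starMatrix G A₁ A₂) A₁ ∧ NO (starMatrix G A₁ A₂) A₂ ∧
    nullityM (starMatrix G A₁ A₂) + 2 = nullityM (nbhdMatrix G) := by
  classical
  have h1' : ¬ ∃ p, (nbhdMatrix G).mulVec p = chi A₁ := h1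
  have h2' : ¬ ∃ p, (nbhdMatrix G).mulVec p = chi A₂ := h2
  have hab : ¬ ∃ p, (nbhdMatrix G).mulVec p = chi A₁ + chi A₂ := by
    rw [← chi_union hd]; exact h3
  have hNs := nbhd_symm G
  have hone : ∃ q, (nbhdMatrix G).mulVec q = 1 := solv_of_orth _ hNs (sutner G)
  have hchar : ∀ x : V → ZMod 2, x + x = 0 := fun x => funext fun v => zmod2_add_self (x v)
  have cancel : ∀ x y : V → ZMod 2, x + y = 0 → y = x := by
    intro x y h
    calc y = (x + x) + y := by rw [hchar, zero_add]
      _ = x + (x + y) := by rw [add_assoc]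
      _ = x := by rw [h, add_zero]
  have key : ∀ (p c : V → ZMod 2), (nbhdMatrix G).mulVec p + c = 1 →
      ∃ r, (nbhdMatrix G).mulVec r = c := by
    intro p c hpc
    obtain ⟨q, hq⟩ := hone
    refine ⟨p + q, ?_⟩
    rw [Matrix.mulVec_add, hq]
    calc (nbhdMatrix G).mulVec p + 1
        = (nbhdMatrix G).mulVec p + ((nbhdMatrix G).mulVec p + c) := by rw [hpc]
      _ = ((nbhdMatrix G).mulVec p + (nbhdMatrix G).mulVec p) + c := by rw [add_assoc]
      _ = c := by rw [hchar, zero_add]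
  have part1 : ∀ p : V → ZMod 2, (starMatrix G A₁ A₂).mulVec p = 1 ↔
      ((nbhdMatrix G).mulVec p = 1 ∧ chi A₁ ⬝ᵥ p = 0 ∧ chi A₂ ⬝ᵥ p = 0) := by
    intro p
    constructor
    · intro hp
      rw [starMat_mulVec] at hp
      rcases zmod2_cases (chi A₂ ⬝ᵥ p) with hα | hα <;>
        rcases zmod2_cases (chi A₁ ⬝ᵥ p) with hβ | hβ
      · rw [hα, hβ, zero_smul, zero_smul, add_zero, add_zero] at hp
        exact ⟨hp, hβ, hα⟩
      · rw [hα, hβ, zero_smul, one_smul, add_zero] at hp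
        exact absurd (key p _ hp) h2'
      · rw [hα, hβ, one_smul, zero_smul, add_zero] at hp
        exact absurd (key p _ hp) h1'
      · rw [hα, hβ, one_smul, one_smul, add_assoc] at hp
        exact absurd (key p _ hp) hab
    · rintro ⟨hp, hβ, hα⟩
      rw [starMat_mulVec, hα, hβ, zero_smul, zero_smul, add_zero, add_zero, hp]
  have ea : ∃ z, (nbhdMatrix G).mulVec z = 0 ∧ chi A₁ ⬝ᵥ z = 1 :=
    exists_ker_dot_one _ hNs h1'
  have eb : ∃ z, (nbhdMatrix G).mulVec z = 0 ∧ chi A₂ ⬝ᵥ z = 1 :=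
    exists_ker_dot_one _ hNs h2'
  have eab : ∃ z, (nbhdMatrix G).mulVec z = 0 ∧ chi A₁ ⬝ᵥ z + chi A₂ ⬝ᵥ z = 1 := by
    obtain ⟨z, hz0, hz1⟩ := exists_ker_dot_one _ hNs hab
    exact ⟨z, hz0, by rwa [add_dotProduct] at hz1⟩
  have eab' : ∃ z, (nbhdMatrix G).mulVec z = 0 ∧ chi A₂ ⬝ᵥ z + chi A₁ ⬝ᵥ z = 1 := by
    obtain ⟨z, hz0, hz1⟩ := eab
    exact ⟨z, hz0, by rwa [add_comm] at hz1⟩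
  obtain ⟨z10, hz10, ha10, hb10⟩ := pick _ _ _ ea eb eab
  obtain ⟨z01, hz01, hb01, ha01⟩ := pick _ _ _ eb ea eab'
  have hkerchar : ∀ z : V → ZMod 2, (starMatrix G A₁ A₂).mulVec z = 0 ↔
      ((nbhdMatrix G).mulVec z = 0 ∧ chi A₁ ⬝ᵥ z = 0 ∧ chi A₂ ⬝ᵥ z = 0) := by
    intro z
    constructor
    · intro hz
      rw [starMat_mulVec] at hz
      rcases zmod2_cases (chi A₂ ⬝ᵥ z) with hα | hα <;>
        rcases zmod2_cases (chi A₁ ⬝ᵥ z) with hβ | hβ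
      · rw [hα, hβ, zero_smul, zero_smul, add_zero, add_zero] at hz
        exact ⟨hz, hβ, hα⟩
      · rw [hα, hβ, zero_smul, one_smul, add_zero] at hz
        exact absurd ⟨z, (cancel _ _ hz).symm⟩ h2'
      · rw [hα, hβ, one_smul, zero_smul, add_zero] at hz
        exact absurd ⟨z, (cancel _ _ hz).symm⟩ h1'
      · rw [hα, hβ, one_smul, one_smul, add_assoc] at hz
        exact absurd ⟨z, (cancel _ _ hz).symm⟩ hab
    · rintro ⟨hz, hβ, hα⟩
      rw [starMat_mulVec, hα, hβ, zero_smul, zero_smul, add_zero, add_zero, hz]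
  refine ⟨part1, ?_, ?_, ?_⟩
  · refine ⟨⟨z01, ?_⟩, fun p hp => ((part1 p).mp hp).2.1⟩
    rw [starMat_mulVec, hz01, hb01, ha01]
    simp
  · refine ⟨⟨z10, ?_⟩, fun p hp => ((part1 p).mp hp).2.2⟩
    rw [starMat_mulVec, hz10, ha10, hb10]
    simp
  · exact nullity_lemma (nbhdMatrix G) (starMatrix G A₁ A₂) (chi A₁) (chi A₂)
      hkerchar z10 z01 hz10 ha10 hb10 hz01 ha01 hb01
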